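/- Let Λ ⊆ ℝ^d be a Meyer set, let (ℝ^d, ℝ^m, ℒ) be a fully Euclidean cut-and-project scheme, W ⊆ ℝ^m precompact with nonempty interior, and F ⊆ ℝ^d finite, such that Λ ⊆ Λ(W) + F. Then aprank(Λ) = d + m. More precisely: (i) for each N ∈ ℕ there exists R > 0 such that for all y ∈ ℝ^d, the set Λ ∩ B_R(y) contains an li-arithmetic progression of length N and rank d + m; and (ii) if s, r₁, …, r_k ∈ ℝ^d with r₁, …, r_k linearly independent over ℤ and k > d + m, then for some N ∈ ℕ not all points s + ∑_{i=1}^{k} cᵢrᵢ (integers 0 ≤ cᵢ ≤ N) lie in Λ. -/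

import Mathlib

open scoped Pointwise

set_option maxHeartbeats 2000000

/-- A set is relatively dense if some radius `R > 0` works: every open ball of
radius `R` contains a point of the set. -/
def RelativelyDense {d : ℕ} (Λ : Set (EuclideanSpace ℝ (Fin d))) : Prop :=
  ∃ R > (0 : ℝ), ∀ x : EuclideanSpace ℝ (Fin d), ∃ y ∈ Λ, y ∈ Metric.ball x R

/-- A set is uniformly discrete if some radius `r > 0` works: every open ball of
radius `r` contains at most one point of the set. -/
def UniformlyDiscrete {d : ℕ} (S : Set (EuclideanSpace ℝ (Fin d))) : Prop :=
  ∃ r > (0 : ℝ), ∀ x : EuclideanSpace ℝ (Fin d), (S ∩ Metric.ball x r).Subsingleton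

/-- A Meyer set: relatively dense with `Λ - Λ` uniformly discrete. -/
def IsMeyerSet {d : ℕ} (Λ : Set (EuclideanSpace ℝ (Fin d))) : Prop :=
  RelativelyDense Λ ∧ UniformlyDiscrete (Λ - Λ)

/-- A lattice in a topological abelian group: a discrete subgroup with compact
quotient (spelled: there is a compact set of representatives). -/
def IsLattice {E : Type*} [AddCommGroup E] [TopologicalSpace E] (L : AddSubgroup E) : Prop :=
  DiscreteTopology L ∧ ∃ K : Set E, IsCompact K ∧ ∀ x : E, ∃ l ∈ L, x - l ∈ K

/-- A fully Euclidean cut-and-project scheme `(ℝ^d, ℝ^m, ℒ)`: `ℒ` is a lattice in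
`ℝ^d × ℝ^m`, the first projection is injective on `ℒ`, and the image of `ℒ` under the
second projection is dense in `ℝ^m`. -/
def IsCPS (d m : ℕ)
    (L : AddSubgroup (EuclideanSpace ℝ (Fin d) × EuclideanSpace ℝ (Fin m))) : Prop :=
  IsLattice L ∧ (∀ p ∈ L, ∀ q ∈ L, p.1 = q.1 → p = q) ∧
    Dense (Prod.snd '' (L : Set (EuclideanSpace ℝ (Fin d) × EuclideanSpace ℝ (Fin m))))

/-- The projection `Λ(W) = {x : ∃ y ∈ W, (x, y) ∈ ℒ}` of the points of the lattice
whose second coordinate lies in the window `W`. -/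
def cutProject {α β : Type*} [AddCommGroup α] [AddCommGroup β]
    (L : AddSubgroup (α × β)) (W : Set β) : Set α :=
  {x | ∃ y ∈ W, (x, y) ∈ L}

/-- `Λ` contains an li-arithmetic progression of rank `k` and length `N`:
there are a starting point `s` and ratios `r₁, …, r_k`, linearly independent over `ℤ`,
with `s + ∑ cᵢ rᵢ ∈ Λ` for all integers `0 ≤ cᵢ ≤ N`. -/
def HasLiAP {d : ℕ} (Λ : Set (EuclideanSpace ℝ (Fin d))) (k N : ℕ) : Prop :=
  ∃ (s : EuclideanSpace ℝ (Fin d)) (r : Fin k → EuclideanSpace ℝ (Fin d)),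
    LinearIndependent ℤ r ∧
    ∀ c : Fin k → ℕ, (∀ i, c i ≤ N) → s + ∑ i, (c i : ℝ) • r i ∈ Λ

section AuxLemmas
open Module Submodule

lemma aux_span_top {E : Type*} [NormedAddCommGroup E] [NormedSpace ℝ E] [FiniteDimensional ℝ E]
    (L : AddSubgroup E) (K : Set E) (hK : IsCompact K) (hrep : ∀ x : E, ∃ l ∈ L, x - l ∈ K) :
    Submodule.span ℝ (L : Set E) = ⊤ := by
  by_contra hne
  set S := Submodule.span ℝ (L : Set E) with hS
  obtain ⟨x, hx⟩ : ∃ x : E, x ∉ S := by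
    by_contra h; push_neg at h; exact hne (Submodule.eq_top_iff'.mpr h)
  haveI hcl : IsClosed (S : Set E) := S.closed_of_finiteDimensional
  obtain ⟨C, hC⟩ := hK.isBounded.exists_norm_le
  have hqx : S.mkQ x ≠ 0 := fun h => hx (by
    rwa [Submodule.mkQ_apply, Submodule.Quotient.mk_eq_zero] at h)
  have hqpos : 0 < ‖S.mkQ x‖ := norm_pos_iff.mpr hqx
  obtain ⟨n, hn⟩ := exists_nat_gt (C / ‖S.mkQ x‖)
  obtain ⟨l, hl, hKl⟩ := hrep ((n : ℝ) • x)
  have hln : ‖S.mkQ ((n:ℝ) • x - l)‖ ≤ C :=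
    le_trans (Submodule.Quotient.norm_mk_le _ _) (hC _ hKl)
  have hml : S.mkQ ((n:ℝ) • x - l) = (n : ℝ) • S.mkQ x := by
    have hlS : l ∈ S := Submodule.subset_span hl
    have h0 : S.mkQ l = 0 := by
      rw [Submodule.mkQ_apply, Submodule.Quotient.mk_eq_zero]; exact hlS
    rw [map_sub, map_smul, h0, sub_zero]
  rw [hml, norm_smul, Real.norm_natCast] at hln
  have : C / ‖S.mkQ x‖ ≥ n := by rw [ge_iff_le, le_div_iff₀ hqpos]; exact hln
  linarith

lemma aux_inter_finite {E : Type*} [NormedAddCommGroup E]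
    (L : AddSubgroup E) (hd : DiscreteTopology L) (K : Set E) (hK : IsCompact K) :
    ((L : Set E) ∩ K).Finite := by
  haveI := hd
  have hcl : IsClosed (L : Set E) := AddSubgroup.isClosed_of_discrete
  have hcpt : IsCompact ((L : Set E) ∩ K) := hK.inter_left hcl
  haveI : DiscreteTopology ((L : Set E) ∩ K : Set E) :=
    DiscreteTopology.of_subset (inferInstanceAs (DiscreteTopology (L : Set E))) Set.inter_subset_left
  exact hcpt.finite (isDiscrete_iff_discreteTopology.mpr ‹_›)

-- Aux 3: every lattice point is in the span of small-second-coordinate points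
lemma aux_chain {A B : Type*} [NormedAddCommGroup A] [NormedAddCommGroup B]
    [NormedSpace ℝ A] [NormedSpace ℝ B]
    (L : AddSubgroup (A × B)) (hd : Dense (Prod.snd '' (L : Set (A × B))))
    {η : ℝ} (hη : 0 < η) :
    ∀ p ∈ L, p ∈ Submodule.span ℝ {q : A × B | q ∈ L ∧ ‖q.2‖ < η} := by
  have hdense : ∀ (z : B) (ε : ℝ), 0 < ε → ∃ ℓ ∈ L, ‖(ℓ : A × B).2 - z‖ < ε := by
    intro z ε hε
    obtain ⟨w, hwball, hwmem⟩ := Metric.dense_iff.mp hd z ε hε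
    obtain ⟨ℓ, hℓ, rfl⟩ := hwmem
    exact ⟨ℓ, hℓ, by rw [← dist_eq_norm]; exact Metric.mem_ball.mp hwball⟩
  have key : ∀ n : ℕ, ∀ p ∈ L, ‖p.2‖ < n * (η / 4) →
      p ∈ Submodule.span ℝ {q : A × B | q ∈ L ∧ ‖q.2‖ < η} := by
    intro n
    induction n with
    | zero => intro p _ h; simp at h; nlinarith [norm_nonneg p.2]
    | succ n ih =>
      intro p hp h
      by_cases hsmall : ‖p.2‖ < η
      · exact Submodule.subset_span ⟨hp, hsmall⟩
      · push_neg at hsmall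
        have hpos : 0 < ‖p.2‖ := lt_of_lt_of_le hη hsmall
        set z' : B := (1 - (η / 2) / ‖p.2‖) • p.2 with hz'
        have hcoef : 0 ≤ 1 - (η / 2) / ‖p.2‖ := by
          rw [sub_nonneg, div_le_one hpos]; linarith
        have hz'norm : ‖z'‖ = ‖p.2‖ - η / 2 := by
          rw [hz', norm_smul, Real.norm_eq_abs, abs_of_nonneg hcoef]
          field_simp
        have hpz' : ‖p.2 - z'‖ = η / 2 := by
          have : p.2 - z' = ((η / 2) / ‖p.2‖) • p.2 := by
            rw [hz']; module
          rw [this, norm_smul, Real.norm_eq_abs, abs_of_nonneg (by positivity)]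
          field_simp
        obtain ⟨ℓ, hℓL, hℓz⟩ := hdense z' (η / 8) (by linarith)
        have hpl : ‖(p - ℓ).2‖ < η := by
          have : (p - ℓ).2 = (p.2 - z') - (ℓ.2 - z') := by simp
          rw [this]
          calc ‖(p.2 - z') - (ℓ.2 - z')‖ ≤ ‖p.2 - z'‖ + ‖ℓ.2 - z'‖ := norm_sub_le _ _
            _ < η / 2 + η / 8 := by rw [hpz']; linarith
            _ < η := by linarith
        have hℓnorm : ‖ℓ.2‖ < n * (η / 4) := by
          calc ‖ℓ.2‖ = ‖z' + (ℓ.2 - z')‖ := by rw [show z' + (ℓ.2 - z') = ℓ.2 by abel]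
            _ ≤ ‖z'‖ + ‖ℓ.2 - z'‖ := norm_add_le _ _
            _ < (‖p.2‖ - η / 2) + η / 8 := by rw [hz'norm]; linarith
            _ < n * (η / 4) := by
                have : ‖p.2‖ < (n + 1) * (η / 4) := by exact_mod_cast h
                nlinarith
        have h1 := ih ℓ hℓL hℓnorm
        have h2 : p - ℓ ∈ Submodule.span ℝ {q : A × B | q ∈ L ∧ ‖q.2‖ < η} :=
          Submodule.subset_span ⟨sub_mem hp hℓL, hpl⟩
        have := Submodule.add_mem _ h1 h2
        rwa [add_sub_cancel] at this
  intro p hp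
  obtain ⟨n, hn⟩ := exists_nat_gt (‖p.2‖ / (η / 4))
  exact key n p hp (by rw [div_lt_iff₀ (by linarith)] at hn; linarith)

-- Aux 4: extract a linearly independent spanning family indexed by Fin (finrank)
lemma aux_extract {E : Type*} [NormedAddCommGroup E] [NormedSpace ℝ E] [FiniteDimensional ℝ E]
    (s : Set E) (hs : Submodule.span ℝ s = ⊤) :
    ∃ t : Fin (finrank ℝ E) → E, (∀ i, t i ∈ s) ∧ LinearIndependent ℝ t := by
  obtain ⟨b, hbs, hbspan, hbli⟩ := exists_linearIndependent ℝ s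
  have hbfin : b.Finite := hbli.setFinite
  haveI := hbfin.fintype
  have hspan : ⊤ ≤ Submodule.span ℝ (Set.range (Subtype.val : b → E)) := by
    rw [Subtype.range_coe, hbspan, hs]
  let bas : Basis b ℝ E := Basis.mk hbli hspan
  have hcard : Fintype.card b = finrank ℝ E := (Module.finrank_eq_card_basis bas).symm
  let e : Fin (finrank ℝ E) ≃ b := (Fintype.equivFinOfCardEq hcard).symm
  refine ⟨fun i => (e i : E), fun i => hbs (e i).2, ?_⟩
  exact hbli.comp e e.injective

lemma aux_reldense {A B : Type*} [NormedAddCommGroup A] [NormedAddCommGroup B]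
    (L : AddSubgroup (A × B)) (K : Set (A × B)) (hK : IsCompact K)
    (hrep : ∀ x : A × B, ∃ l ∈ L, x - l ∈ K)
    (hd : Dense (Prod.snd '' (L : Set (A × B)))) (w : B) {ε : ℝ} (hε : 0 < ε) :
    ∃ R > (0 : ℝ), ∀ x : A, ∃ p ∈ L, ‖p.2 - w‖ < ε ∧ ‖p.1 - x‖ < R := by
  classical
  set C : Set B := Prod.snd '' K with hCdef
  have hCc : IsCompact C := hK.image continuous_snd
  have hcover : C ⊆ ⋃ t : L, Metric.ball ((t : A × B).2) ε := by
    intro z _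
    obtain ⟨u, huball, humem⟩ := Metric.dense_iff.mp hd z ε hε
    obtain ⟨ℓ, hℓ, rfl⟩ := humem
    exact Set.mem_iUnion.mpr ⟨⟨ℓ, hℓ⟩, Metric.mem_ball.mpr (by rw [dist_comm]; exact Metric.mem_ball.mp huball)⟩
  obtain ⟨T, hT⟩ := hCc.elim_finite_subcover (fun t : L => Metric.ball ((t : A × B).2) ε)
    (fun _ => Metric.isOpen_ball) hcover
  obtain ⟨CK, hCK⟩ := hK.isBounded.exists_norm_le
  obtain ⟨CT, hCT⟩ : ∃ CT : ℝ, ∀ t ∈ T, ‖((t : L) : A × B).1‖ ≤ CT := by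
    obtain ⟨M, hM⟩ := (T.image fun t => ‖((t : L) : A × B).1‖).exists_le
    exact ⟨M, fun t ht => hM _ (Finset.mem_image_of_mem _ ht)⟩
  have hCK0 : (0:ℝ) ≤ CK := by
    obtain ⟨l, _, hKl⟩ := hrep 0
    exact le_trans (norm_nonneg _) (hCK _ hKl)
  have hCT0 : ∀ t ∈ T, (0:ℝ) ≤ CT := fun t ht => le_trans (norm_nonneg _) (hCT t ht)
  refine ⟨CK + max CT 0 + 1, by positivity, ?_⟩
  intro x
  obtain ⟨l, hl, hKl⟩ := hrep (x, w)
  have hzC : w - l.2 ∈ C := ⟨(x, w) - l, hKl, rfl⟩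
  obtain ⟨t, htT, htz⟩ : ∃ t ∈ T, w - l.2 ∈ Metric.ball ((t : A × B).2) ε := by
    have := hT hzC
    simpa using this
  refine ⟨l + (t : A × B), add_mem hl (t : L).2, ?_, ?_⟩
  · have : (l + (t : A × B)).2 - w = ((t : A × B).2 - (w - l.2)) := by
      simp [Prod.snd_add]; abel
    rw [this, ← dist_eq_norm, dist_comm]
    exact Metric.mem_ball.mp htz
  · have heq : (l + (t : A × B)).1 - x = (t : A × B).1 - ((x, w) - l).1 := by
      simp [Prod.fst_add, Prod.fst_sub]; abel
    rw [heq]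
    calc ‖(t : A × B).1 - ((x, w) - l).1‖ ≤ ‖(t : A × B).1‖ + ‖((x, w) - l).1‖ := norm_sub_le _ _
      _ ≤ CT + CK := add_le_add (hCT t htT) (le_trans (norm_fst_le _) (hCK _ hKl))
      _ < CK + max CT 0 + 1 := by
          have := le_max_left CT (0:ℝ); linarith

-- Aux 6: finite Gallai-type theorem from Hales-Jewett
lemma aux_gallai (n N : ℕ) (κ : Type) [Finite κ] :
    ∃ M : ℕ, ∀ C : (Fin n → ℕ) → κ, ∃ (k : ℕ) (b : Fin n → ℕ) (c₀ : κ),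
      0 < k ∧ (∀ c : Fin n → ℕ, (∀ i, c i ≤ N) → ∀ i, k * c i + b i ≤ M) ∧
      ∀ c : Fin n → ℕ, (∀ i, c i ≤ N) → C (fun i => k * c i + b i) = c₀ := by
  classical
  obtain ⟨ι, ιfin, hι⟩ :=
    Combinatorics.Line.exists_mono_in_high_dimension (Fin n → Fin (N + 1)) κ
  refine ⟨Fintype.card ι * N, fun C => ?_⟩
  obtain ⟨l, c₀, hl⟩ := hι fun v => C fun i => ∑ j, ((v j i : ℕ))
  set s : Finset ι := Finset.univ.filter fun j => l.idxFun j = none with hs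
  set b : Fin n → ℕ := fun i => ∑ j ∈ sᶜ, ((l.idxFun j).map fun a => (a i : ℕ)).getD 0 with hb
  have hkpos : 0 < s.card := by
    refine Finset.card_pos.mpr ⟨l.proper.choose, ?_⟩
    rw [hs, Finset.mem_filter]
    exact ⟨Finset.mem_univ _, l.proper.choose_spec⟩
  have hbound : ∀ i, b i ≤ sᶜ.card * N := by
    intro i
    calc b i ≤ ∑ _j ∈ sᶜ, N := by
          refine Finset.sum_le_sum fun j _ => ?_
          cases hj : l.idxFun j with
          | none => simp
          | some a => simp [hj]; exact Fin.is_le _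
      _ = sᶜ.card * N := by rw [Finset.sum_const, smul_eq_mul]
  refine ⟨s.card, b, c₀, hkpos, ?_, ?_⟩
  · intro c hc i
    calc s.card * c i + b i ≤ s.card * N + sᶜ.card * N :=
        add_le_add (Nat.mul_le_mul_left _ (hc i)) (hbound i)
      _ = Fintype.card ι * N := by
          rw [← add_mul, Finset.card_add_card_compl]
  · intro c hc
    set x : Fin n → Fin (N + 1) := fun i => ⟨c i, Nat.lt_succ_of_le (hc i)⟩ with hx
    rw [← hl x]
    congr 1
    funext i
    have hsplit : ∑ j, ((l x j i : ℕ)) = ∑ j ∈ s, ((l x j i : ℕ)) + ∑ j ∈ sᶜ, ((l x j i : ℕ)) :=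
      (Finset.sum_add_sum_compl s _).symm
    rw [hsplit]
    congr 1
    · have : ∀ j ∈ s, ((l x j i : ℕ)) = c i := by
        intro j hj
        rw [hs, Finset.mem_filter] at hj
        rw [l.apply_none _ _ hj.2]
      rw [Finset.sum_congr rfl this, Finset.sum_const, smul_eq_mul]
    · refine Finset.sum_congr rfl fun j hj => ?_
      rw [hs, Finset.compl_filter, Finset.mem_filter] at hj
      obtain ⟨a, ha⟩ := Option.ne_none_iff_exists'.mp hj.2
      rw [l.apply_some ha]
      simp [ha]

end AuxLemmas

/-- if `Λ ⊆ ℝ^d` is a Meyer set with `Λ ⊆ Λ(W) + F` for a fully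
Euclidean model set `Λ(W)` in `(ℝ^d, ℝ^m, ℒ)` and a finite set `F`, then
`aprank Λ = d + m`. More precisely: (i) for each `N` there is `R > 0` such that
every ball `B_R(y)` contains an li-arithmetic progression of length `N` and rank
`d + m` lying inside `Λ`; (ii) no li-arithmetic progression of rank `k > d + m`
lies in `Λ` for every length. -/
theorem stmt_13 {d m : ℕ} (Λ : Set (EuclideanSpace ℝ (Fin d))) (hΛ : IsMeyerSet Λ)
    (L : AddSubgroup (EuclideanSpace ℝ (Fin d) × EuclideanSpace ℝ (Fin m)))
    (hL : IsCPS d m L) (W : Set (EuclideanSpace ℝ (Fin m)))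
    (hWc : IsCompact (closure W)) (hWi : (interior W).Nonempty)
    (F : Set (EuclideanSpace ℝ (Fin d))) (hF : F.Finite)
    (hsub : Λ ⊆ cutProject L W + F) :
    (∀ N : ℕ, ∃ R > (0 : ℝ), ∀ y : EuclideanSpace ℝ (Fin d),
      ∃ (s : EuclideanSpace ℝ (Fin d)) (r : Fin (d + m) → EuclideanSpace ℝ (Fin d)),
        LinearIndependent ℤ r ∧
        ∀ c : Fin (d + m) → ℕ, (∀ i, c i ≤ N) →
          s + ∑ i, (c i : ℝ) • r i ∈ Λ ∩ Metric.ball y R) ∧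
    (∀ k : ℕ, d + m < k → ∀ (s : EuclideanSpace ℝ (Fin d))
        (r : Fin k → EuclideanSpace ℝ (Fin d)), LinearIndependent ℤ r →
        ∃ (N : ℕ) (c : Fin k → ℕ), (∀ i, c i ≤ N) ∧
          s + ∑ i, (c i : ℝ) • r i ∉ Λ) := by
  classical
  obtain ⟨⟨hdisc, K, hKc, hKrep⟩, hinj, hdense⟩ := hL
  have span_top : Submodule.span ℝ
      (L : Set (EuclideanSpace ℝ (Fin d) × EuclideanSpace ℝ (Fin m))) = ⊤ :=
    aux_span_top L K hKc hKrep
  have hrankE : Module.finrank ℝ (EuclideanSpace ℝ (Fin d) × EuclideanSpace ℝ (Fin m))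
      = d + m := by
    rw [Module.finrank_prod, finrank_euclideanSpace_fin, finrank_euclideanSpace_fin]
  constructor
  · -- Part (i)
    intro N
    obtain ⟨R₀, hR₀pos, hRD⟩ := hΛ.1
    obtain ⟨CF', hCF'⟩ := hF.isBounded.exists_norm_le
    set CF := max CF' 0 with hCFdef
    have hCF : ∀ f ∈ F, ‖f‖ ≤ CF := fun f hf => le_trans (hCF' f hf) (le_max_left _ _)
    have hCF0 : (0:ℝ) ≤ CF := le_max_right _ _
    obtain ⟨CW', hCW'⟩ := hWc.isBounded.exists_norm_le
    set CW := max CW' 0 with hCWdef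
    have hCW : ∀ w ∈ closure W, ‖w‖ ≤ CW := fun w hw => le_trans (hCW' w hw) (le_max_left _ _)
    have hCW0 : (0:ℝ) ≤ CW := le_max_right _ _
    set CΔ := max (R₀ + CF) (CW + 1) with hCΔdef
    have hCΔ0 : (0:ℝ) < CΔ := lt_of_lt_of_le (by linarith) (le_max_right _ _)
    set Kc : Set (EuclideanSpace ℝ (Fin d) × EuclideanSpace ℝ (Fin m)) :=
      Metric.closedBall 0 CΔ with hKcdef
    have hΔfin : ((L : Set (EuclideanSpace ℝ (Fin d) × EuclideanSpace ℝ (Fin m))) ∩ Kc).Finite :=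
      aux_inter_finite L hdisc Kc (isCompact_closedBall 0 CΔ)
    set G : Set (EuclideanSpace ℝ (Fin d)) :=
      (Prod.fst '' ((L : Set (EuclideanSpace ℝ (Fin d) × EuclideanSpace ℝ (Fin m))) ∩ Kc)) + F
      with hGdef
    have hGfin : G.Finite := (hΔfin.image _).add hF
    have hGbdd : ∀ u ∈ G, ‖u‖ ≤ CΔ + CF := by
      intro u hu
      obtain ⟨w, ⟨δ, hδ, rfl⟩, fv, hfv, rfl⟩ := Set.mem_add.mp hu
      calc ‖δ.1 + fv‖ ≤ ‖δ.1‖ + ‖fv‖ := norm_add_le _ _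
        _ ≤ CΔ + CF := add_le_add (le_trans (norm_fst_le δ)
            (mem_closedBall_zero_iff.mp hδ.2)) (hCF fv hfv)
    haveI : Fintype ↥G := hGfin.fintype
    obtain ⟨M, hM⟩ := aux_gallai (d + m) N (Option ↥G)
    set η : ℝ := 1 / (2 * (((d+m) * M : ℕ) : ℝ) + 2) with hηdef
    have hηpos : 0 < η := by positivity
    have hsspan : Submodule.span ℝ {qq : EuclideanSpace ℝ (Fin d) × EuclideanSpace ℝ (Fin m) |
        qq ∈ L ∧ ‖qq.2‖ < η} = ⊤ := by
      rw [eq_top_iff, ← span_top]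
      exact Submodule.span_le.mpr fun p hp => aux_chain L hdense hηpos p hp
    obtain ⟨t0, ht0mem, ht0li⟩ := aux_extract _ hsspan
    set t : Fin (d + m) → EuclideanSpace ℝ (Fin d) × EuclideanSpace ℝ (Fin m) :=
      t0 ∘ (finCongr hrankE.symm) with htdef
    have htli : LinearIndependent ℝ t := ht0li.comp _ (finCongr hrankE.symm).injective
    have htL : ∀ i, t i ∈ L := fun i => (ht0mem _).1
    have htη : ∀ i, ‖(t i).2‖ < η := fun i => (ht0mem _).2
    obtain ⟨R₁, hR₁pos, hbase⟩ := aux_reldense L K hKc hKrep hdense 0 (ε := 1/2) (by norm_num)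
    set Ct : ℝ := ∑ i : Fin (d+m), (M : ℝ) * ‖(t i).1‖ with hCtdef
    have hCt0 : 0 ≤ Ct := Finset.sum_nonneg fun i _ => by positivity
    refine ⟨R₁ + Ct + (CΔ + CF) + 1, by linarith, ?_⟩
    intro y
    obtain ⟨a, haL, ha2, ha1⟩ := hbase y
    rw [sub_zero] at ha2
    set g : (Fin (d+m) → ℕ) → EuclideanSpace ℝ (Fin d) × EuclideanSpace ℝ (Fin m) :=
      fun c => a + ∑ i, (c i : ℝ) • t i with hgdef
    have hgL : ∀ c, g c ∈ L := by
      intro c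
      refine AddSubgroup.add_mem _ haL (AddSubgroup.sum_mem _ fun i _ => ?_)
      rw [show ((c i : ℝ)) • t i = c i • t i from Nat.cast_smul_eq_nsmul ℝ _ _]
      exact AddSubgroup.nsmul_mem _ (htL i) _
    have hg1 : ∀ c, (g c).1 = a.1 + ∑ i, (c i : ℝ) • (t i).1 := by
      intro c
      simp [hgdef, Prod.fst_sum]
    have hg2 : ∀ c, (∀ i, c i ≤ M) → ‖(g c).2‖ ≤ 1 := by
      intro c hc
      have h2 : (g c).2 = a.2 + ∑ i, (c i : ℝ) • (t i).2 := by simp [hgdef, Prod.snd_sum]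
      rw [h2]
      have hsum : ‖∑ i, (c i : ℝ) • (t i).2‖ ≤ ∑ i : Fin (d+m), (M : ℝ) * η := by
        refine le_trans (norm_sum_le _ _) (Finset.sum_le_sum fun i _ => ?_)
        rw [norm_smul, Real.norm_natCast]
        have h1 : (c i : ℝ) ≤ (M : ℝ) := Nat.cast_le.mpr (hc i)
        have h3 := (htη i).le
        exact mul_le_mul h1 h3 (norm_nonneg _) (Nat.cast_nonneg M)
      have hMη : ∑ i : Fin (d+m), (M:ℝ) * η ≤ 1/2 := by
        rw [Finset.sum_const, Finset.card_univ, Fintype.card_fin, nsmul_eq_mul]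
        have hcast : ((d+m : ℕ):ℝ) * ((M:ℕ):ℝ) = (((d+m) * M : ℕ) : ℝ) := by push_cast; ring
        rw [hηdef, ← mul_assoc, hcast]
        set X : ℝ := (((d+m) * M : ℕ) : ℝ) with hXdef
        have hX0 : (0:ℝ) ≤ X := Nat.cast_nonneg _
        rw [mul_one_div, div_le_iff₀ (by linarith)]
        linarith
      calc ‖a.2 + ∑ i, (c i : ℝ) • (t i).2‖ ≤ ‖a.2‖ + ‖∑ i, (c i : ℝ) • (t i).2‖ :=
            norm_add_le _ _
        _ ≤ 1/2 + 1/2 := add_le_add ha2.le (le_trans hsum hMη)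
        _ = 1 := by norm_num
    have hgood : ∀ c : Fin (d+m) → ℕ, (∀ i, c i ≤ M) → ∃ u : ↥G, (g c).1 + ↑u ∈ Λ := by
      intro c hc
      obtain ⟨x, hxΛ, hxball⟩ := hRD ((g c).1)
      obtain ⟨z, hz, fv, hfv, hzf⟩ := Set.mem_add.mp (hsub hxΛ)
      obtain ⟨wv, hwvW, hwvL⟩ := hz
      set δ : EuclideanSpace ℝ (Fin d) × EuclideanSpace ℝ (Fin m) :=
        ((z, wv) : EuclideanSpace ℝ (Fin d) × EuclideanSpace ℝ (Fin m)) - g c with hδdef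
      have hδL : δ ∈ L := sub_mem hwvL (hgL c)
      have hδ1 : δ.1 = z - (g c).1 := rfl
      have hδ2 : δ.2 = wv - (g c).2 := rfl
      have hδmem : δ ∈ Kc := by
        rw [hKcdef, mem_closedBall_zero_iff, Prod.norm_def]
        refine max_le ?_ ?_
        · rw [hδ1]
          have hz1 : z = x - fv := by rw [← hzf]; abel
          calc ‖z - (g c).1‖ = ‖(x - (g c).1) - fv‖ := by rw [hz1]; congr 1; abel
            _ ≤ ‖x - (g c).1‖ + ‖fv‖ := norm_sub_le _ _
            _ ≤ R₀ + CF := add_le_add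
                (le_of_lt (by rw [← dist_eq_norm]; exact Metric.mem_ball.mp hxball))
                (hCF fv hfv)
            _ ≤ CΔ := le_max_left _ _
        · rw [hδ2]
          calc ‖wv - (g c).2‖ ≤ ‖wv‖ + ‖(g c).2‖ := norm_sub_le _ _
            _ ≤ CW + 1 := add_le_add (hCW wv (subset_closure hwvW)) (hg2 c hc)
            _ ≤ CΔ := le_max_right _ _
      refine ⟨⟨δ.1 + fv, Set.add_mem_add ⟨δ, ⟨hδL, hδmem⟩, rfl⟩ hfv⟩, ?_⟩
      show (g c).1 + (δ.1 + fv) ∈ Λ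
      have hfin : (g c).1 + (δ.1 + fv) = x := by rw [hδ1, ← hzf]; abel
      rwa [hfin]
    set C : (Fin (d+m) → ℕ) → Option ↥G := fun c =>
      if h : ∃ u : ↥G, (g c).1 + ↑u ∈ Λ then some h.choose else none with hCdef
    obtain ⟨k₀, b, c₀, hk₀pos, hbnd, hmono⟩ := hM C
    have hex0 : ∃ u : ↥G, (g (fun i => k₀ * (fun _ : Fin (d+m) => 0) i + b i)).1 + ↑u ∈ Λ :=
      hgood _ (hbnd (fun _ => 0) (fun i => Nat.zero_le N))
    obtain ⟨u₀, hc0eq⟩ : ∃ u₀ : ↥G, c₀ = some u₀ := by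
      have h0 := hmono (fun _ => 0) (fun i => Nat.zero_le N)
      refine ⟨hex0.choose, ?_⟩
      rw [← h0]
      simp only [hCdef]
      rw [dif_pos hex0]
    have hmem : ∀ c : Fin (d+m) → ℕ, (∀ i, c i ≤ N) →
        (g (fun i => k₀ * c i + b i)).1 + ↑u₀ ∈ Λ := by
      intro c hc
      have hex : ∃ u : ↥G, (g (fun i => k₀ * c i + b i)).1 + ↑u ∈ Λ := hgood _ (hbnd c hc)
      have h1 := hmono c hc
      rw [hc0eq] at h1
      have h2 : some hex.choose = some u₀ := by
        rw [← h1]; simp only [hCdef]; rw [dif_pos hex]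
      have h3 := hex.choose_spec
      rwa [Option.some_inj.mp h2] at h3
    refine ⟨a.1 + ∑ i, (b i : ℝ) • (t i).1 + ↑u₀, fun i => (k₀ : ℝ) • (t i).1, ?_, ?_⟩
    · -- ℤ-linear independence of the ratios
      rw [Fintype.linearIndependent_iff]
      intro gz hgz
      set Q : EuclideanSpace ℝ (Fin d) × EuclideanSpace ℝ (Fin m) :=
        ∑ i, ((gz i : ℝ) * (k₀ : ℝ)) • t i with hQdef
      have hQL : Q ∈ L := by
        refine AddSubgroup.sum_mem _ fun i _ => ?_
        have : ((gz i : ℝ) * (k₀ : ℝ)) • t i = (gz i * (k₀:ℤ)) • t i := by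
          rw [← Int.cast_smul_eq_zsmul ℝ (gz i * (k₀:ℤ))]
          push_cast
          ring_nf
        rw [this]
        exact AddSubgroup.zsmul_mem _ (htL i) _
      have hQ1 : Q.1 = 0 := by
        rw [hQdef, Prod.fst_sum]
        have hterm : ∀ i : Fin (d+m), ((((gz i : ℝ) * (k₀ : ℝ)) • t i)).1
            = gz i • ((k₀ : ℝ) • (t i).1) := by
          intro i
          rw [Prod.smul_fst, mul_smul, Int.cast_smul_eq_zsmul]
        rw [Finset.sum_congr rfl fun i _ => hterm i]
        exact hgz
      have hQ0 : Q = 0 := hinj Q hQL 0 (zero_mem L) (by rw [hQ1]; rfl)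
      have h4 := Fintype.linearIndependent_iff.mp htli (fun i => (gz i : ℝ) * (k₀:ℝ))
        (by rw [← hQdef]; exact hQ0)
      intro i
      have h5 := h4 i
      have hk0ne : ((k₀:ℕ):ℝ) ≠ 0 := Nat.cast_ne_zero.mpr hk₀pos.ne'
      have h6 : (gz i : ℝ) = 0 := by
        rcases mul_eq_zero.mp h5 with h | h
        · exact h
        · exact absurd h hk0ne
      exact_mod_cast h6
    · intro c hc
      have hterm : ∀ i : Fin (d+m), (((k₀ * c i + b i : ℕ)) : ℝ) • (t i).1
          = (c i : ℝ) • ((k₀:ℝ) • (t i).1) + (b i : ℝ) • (t i).1 := by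
        intro i
        push_cast
        rw [add_smul, smul_smul, mul_comm ((c i : ℝ)) ((k₀:ℝ))]
      have heq : a.1 + ∑ i, (b i : ℝ) • (t i).1 + ↑u₀
            + ∑ i, (c i : ℝ) • ((k₀:ℝ) • (t i).1)
          = (g (fun i => k₀ * c i + b i)).1 + ↑u₀ := by
        rw [hg1]
        rw [Finset.sum_congr rfl fun i _ => hterm i, Finset.sum_add_distrib]
        abel
      constructor
      · have hgoal : a.1 + ∑ i, (b i : ℝ) • (t i).1 + ↑u₀
            + ∑ i, (c i : ℝ) • ((k₀:ℝ) • (t i).1) ∈ Λ := by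
          rw [heq]; exact hmem c hc
        exact hgoal
      · have hball : a.1 + ∑ i, (b i : ℝ) • (t i).1 + ↑u₀
            + ∑ i, (c i : ℝ) • ((k₀:ℝ) • (t i).1) ∈ Metric.ball y (R₁ + Ct + (CΔ + CF) + 1) := by
          rw [Metric.mem_ball, dist_eq_norm, heq, hg1]
          have hbd1 : ‖∑ i, (((k₀ * c i + b i : ℕ)) : ℝ) • (t i).1‖ ≤ Ct := by
            refine le_trans (norm_sum_le _ _) ?_
            rw [hCtdef]
            refine Finset.sum_le_sum fun i _ => ?_
            rw [norm_smul, Real.norm_natCast]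
            exact mul_le_mul_of_nonneg_right (Nat.cast_le.mpr (hbnd c hc i)) (norm_nonneg _)
          have hu₀bd : ‖(u₀ : EuclideanSpace ℝ (Fin d))‖ ≤ CΔ + CF := hGbdd _ u₀.2
          have hsplit : a.1 + ∑ i, (((k₀ * c i + b i : ℕ)) : ℝ) • (t i).1 + ↑u₀ - y
              = (a.1 - y) + (∑ i, (((k₀ * c i + b i : ℕ)) : ℝ) • (t i).1 + ↑u₀) := by
            abel
          rw [hsplit]
          calc ‖(a.1 - y) + (∑ i, (((k₀ * c i + b i : ℕ)) : ℝ) • (t i).1 + ↑u₀)‖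
              ≤ ‖a.1 - y‖ + (‖∑ i, (((k₀ * c i + b i : ℕ)) : ℝ) • (t i).1‖
                + ‖(u₀ : EuclideanSpace ℝ (Fin d))‖) :=
                le_trans (norm_add_le _ _) (by gcongr; exact norm_add_le _ _)
            _ < R₁ + Ct + (CΔ + CF) + 1 := by
                have := ha1
                linarith
        exact hball
  · -- Part (ii)
    intro k hk s r hr
    by_contra hcon
    push_neg at hcon
    set NF := hF.toFinset.card with hNF
    have hpt : ∀ (i : Fin k) (t : ℕ), t ≤ NF → s + (t : ℝ) • r i ∈ Λ := by
      intro i t ht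
      have h := hcon NF (fun j => if j = i then t else 0) (fun j => by split <;> omega)
      have hsum : ∑ j, (((if j = i then t else 0 : ℕ) : ℝ)) • r j = (t : ℝ) • r i := by
        simp only [apply_ite (fun z : ℕ => (z : ℝ)), Nat.cast_zero, ite_smul, zero_smul,
          Finset.sum_ite_eq', Finset.mem_univ, if_true]
      rwa [hsum] at h
    have hdecomp : ∀ x ∈ Λ, ∃ ℓ : EuclideanSpace ℝ (Fin d) × EuclideanSpace ℝ (Fin m),
        ℓ ∈ L ∧ ∃ f ∈ F, x = ℓ.1 + f := by
      intro x hx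
      obtain ⟨z, hz, f, hf, hzf⟩ := Set.mem_add.mp (hsub hx)
      obtain ⟨y, hyW, hyL⟩ := hz
      exact ⟨(z, y), hyL, f, hf, hzf.symm⟩
    have hq : ∀ i : Fin k, ∃ q : EuclideanSpace ℝ (Fin d) × EuclideanSpace ℝ (Fin m),
        q ∈ L ∧ ∃ mi : ℕ, 0 < mi ∧ q.1 = (mi : ℝ) • r i := by
      intro i
      choose ℓ hℓL f hfF hxf using fun t : Fin (NF + 1) =>
        hdecomp _ (hpt i t (Nat.le_of_lt_succ t.2))
      obtain ⟨t1, _, t2, _, hne, hfeq⟩ := Finset.exists_ne_map_eq_of_card_lt_of_maps_to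
        (s := Finset.univ) (t := hF.toFinset)
        (by rw [Finset.card_univ, Fintype.card_fin]; omega)
        (fun t _ => hF.mem_toFinset.mpr (hfF t))
      have key : ∀ u1 u2 : Fin (NF + 1), (u1 : ℕ) < (u2 : ℕ) → f u1 = f u2 →
          ∃ q : EuclideanSpace ℝ (Fin d) × EuclideanSpace ℝ (Fin m),
            q ∈ L ∧ ∃ mi : ℕ, 0 < mi ∧ q.1 = (mi : ℝ) • r i := by
        intro u1 u2 hu hf12
        refine ⟨ℓ u2 - ℓ u1, sub_mem (hℓL u2) (hℓL u1), (u2 : ℕ) - (u1 : ℕ), by omega, ?_⟩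
        have h1 : (ℓ u1).1 = s + ((u1 : ℕ) : ℝ) • r i - f u1 := by
          rw [hxf u1]; abel
        have h2 : (ℓ u2).1 = s + ((u2 : ℕ) : ℝ) • r i - f u2 := by
          rw [hxf u2]; abel
        have hss : (ℓ u2 - ℓ u1).1 = (ℓ u2).1 - (ℓ u1).1 := rfl
        rw [hss, h1, h2, hf12]
        have hcast : (((u2 : ℕ) - (u1 : ℕ) : ℕ) : ℝ) = ((u2 : ℕ) : ℝ) - ((u1 : ℕ) : ℝ) := by
          push_cast [Nat.cast_sub (le_of_lt hu)]; ring
        rw [hcast, sub_smul]; abel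
      rcases lt_or_gt_of_ne (fun h : (t1 : ℕ) = (t2 : ℕ) => hne (Fin.ext h)) with h | h
      · exact key t1 t2 h hfeq
      · exact key t2 t1 h hfeq.symm
    choose q hqL mi hmi hq1 using hq
    have hli : LinearIndependent ℤ q := by
      rw [Fintype.linearIndependent_iff]
      intro gz hg
      have h1 : ∑ i, gz i • (q i).1 = 0 := by
        have h := congrArg Prod.fst hg
        rw [Prod.fst_sum] at h
        simpa using h
      have h2 : ∑ i, (gz i * (mi i : ℤ)) • r i = 0 := by
        rw [← h1]
        refine Finset.sum_congr rfl fun i _ => ?_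
        calc (gz i * (mi i : ℤ)) • r i
            = ((gz i * (mi i : ℤ) : ℤ) : ℝ) • r i := (Int.cast_smul_eq_zsmul ℝ _ _).symm
          _ = (gz i : ℝ) • (((mi i : ℕ) : ℝ) • r i) := by push_cast; rw [mul_smul]
          _ = gz i • (q i).1 := by rw [hq1 i, Int.cast_smul_eq_zsmul]
      have h3 := Fintype.linearIndependent_iff.mp hr _ h2
      intro i
      have h5 := h3 i
      have hmine : (mi i : ℤ) ≠ 0 := by exact_mod_cast (hmi i).ne'
      exact (mul_eq_zero.mp h5).resolve_right hmine
    set L' := AddSubgroup.toIntSubmodule L with hL'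
    haveI : DiscreteTopology L' := hdisc
    haveI : IsZLattice ℝ L' := ⟨by rw [hL', AddSubgroup.coe_toIntSubmodule]; exact span_top⟩
    haveI := ZLattice.module_finite ℝ L'
    set v : Fin k → L' := fun i => ⟨q i, hqL i⟩ with hv
    have hliv : LinearIndependent ℤ v := by
      apply LinearIndependent.of_comp L'.subtype
      have hvq : L'.subtype ∘ v = q := funext fun i => rfl
      rwa [hvq]
    have hcard := hliv.fintype_card_le_finrank
    rw [Fintype.card_fin, ZLattice.rank ℝ L', hrankE] at hcard
    omega
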